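/- Let r ≥ 1 and, for each f ∈ {1,…,r}, let c_f ≥ 0 and L_f ≥ 1 a natural number; let t > 0, β ≥ 0, and Λ a real number. Then the function E₁ : ℝ → ℝ defined by E₁(α) = Σ_{f=1}^r c_f · ( α e^{β t} / (α − t) )^{L_f} − (Λ + t) is convex on the open interval (t, ∞), i.e., ConvexOn ℝ (Set.Ioi t) E₁. -/

import Mathlib

open Set Finset

lemma my_convexOn_sum {ι : Type*} [DecidableEq ι] (s : Finset ι) {S : Set ℝ} (hS : Convex ℝ S)
    (f : ι → ℝ → ℝ) (h : ∀ i ∈ s, ConvexOn ℝ S (f i)) :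
    ConvexOn ℝ S (fun x => ∑ i ∈ s, f i x) := by
  induction s using Finset.induction_on with
  | empty => simpa using convexOn_const 0 hS
  | insert _ _ hnot ih =>
      rename_i a s'
      simp only [Finset.sum_insert hnot]
      exact (h a (Finset.mem_insert_self a s')).add
        (ih fun i hi => h i (Finset.mem_insert_of_mem hi))

lemma my_comp {s T : Set ℝ} {f g : ℝ → ℝ} (hg : ConvexOn ℝ T g)
    (hmono : MonotoneOn g T) (hf : ConvexOn ℝ s f) (hmap : Set.MapsTo f s T) :
    ConvexOn ℝ s (fun x => g (f x)) :=
  ⟨hf.1, fun x hx y hy a b ha hb hab =>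
    (hmono (hmap (hf.1 hx hy ha hb hab)) (hg.1 (hmap hx) (hmap hy) ha hb hab)
        (hf.2 hx hy ha hb hab)).trans (hg.2 (hmap hx) (hmap hy) ha hb hab)⟩

lemma my_inv_convex (t : ℝ) : ConvexOn ℝ (Set.Ioi t) (fun α : ℝ => (α - t)⁻¹) := by
  have h1 : ConvexOn ℝ (Set.Ioi (0:ℝ)) (fun x : ℝ => x ^ (-1 : ℤ)) :=
    (strictConvexOn_zpow (by norm_num) (by norm_num)).convexOn
  have h2 := h1.translate_right (-t)
  have hset : ((fun z : ℝ => -t + z) ⁻¹' Set.Ioi 0) = Set.Ioi t := by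
    ext x; simp [neg_add_eq_sub, sub_pos]
  rw [hset] at h2
  exact h2.congr fun x _ => by
    simp [Function.comp, zpow_neg_one, neg_add_eq_sub]

/-- The constraint function `E₁(α) = Σ_f c_f (α e^{βt}/(α − t))^{L_f} − (Λ + t)` is convex
in the service rate `α` on `(t, ∞)`, for nonnegative weights `c_f`, `t > 0`, `β ≥ 0`,
and segment counts `L_f ≥ 1`. -/
theorem constraint42_convex_in_alpha
    (r : ℕ) (hr : 1 ≤ r) (c : Fin r → ℝ) (hc : ∀ f, 0 ≤ c f)
    (L : Fin r → ℕ) (hL : ∀ f, 1 ≤ L f)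
    (t β Λ : ℝ) (ht : 0 < t) (hβ : 0 ≤ β) :
    ConvexOn ℝ (Set.Ioi t)
      (fun α : ℝ => ∑ f, c f * (α * Real.exp (β * t) / (α - t)) ^ (L f) - (Λ + t)) := by
  set E := Real.exp (β * t) with hE
  have hE0 : 0 < E := Real.exp_pos _
  have hφ : ConvexOn ℝ (Set.Ioi t) (fun α : ℝ => α * E / (α - t)) := by
    have h := ((my_inv_convex t).smul (c := t * E) (by positivity)).add_const E
    exact h.congr fun α hα => by
      have h2 : α - t ≠ 0 := ne_of_gt (sub_pos.mpr hα)
      simp only [Pi.add_apply, smul_eq_mul]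
      field_simp
      ring
  have hφpos : Set.MapsTo (fun α : ℝ => α * E / (α - t)) (Set.Ioi t) (Set.Ici 0) := by
    intro α hα
    have h1 : 0 < α := ht.trans hα
    have h2 : 0 < α - t := sub_pos.mpr hα
    have : 0 ≤ α * E / (α - t) := by positivity
    simpa using this
  have hterm : ∀ f : Fin r, ConvexOn ℝ (Set.Ioi t)
      (fun α : ℝ => c f * (α * E / (α - t)) ^ (L f)) := by
    intro f
    have hmono : MonotoneOn (fun x : ℝ => x ^ (L f)) (Set.Ici 0) :=
      fun a ha b _ hab => pow_le_pow_left₀ ha hab _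
    exact (my_comp (convexOn_pow (L f)) hmono hφ hφpos).smul (hc f)
  have hsum := (my_convexOn_sum Finset.univ (convex_Ioi t)
      (fun f (α : ℝ) => c f * (α * E / (α - t)) ^ (L f)) (fun f _ => hterm f)).add_const
      (-(Λ + t))
  exact hsum.congr fun α _ => by simp [sub_eq_add_neg]
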